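/- (Local Sensitivity generalization bound.) Let A map each dataset S \in Z^n to a model h = A(S) whose loss \ell_h is measurable with values in [0, C] where C = \sup_{z \in Z} \ell_h(z). For S consisting of n i.i.d. samples from P and any \delta > 0, with probability at least 1 - \delta over the draw of S: F(P,h) \le C(\sqrt{2}+1) \sqrt{ |T_S| \ln(2K/\delta) / n } + 2 C |T_S| \ln(2K/\delta) / n + F(S,h) + \sum_{i \in T_S} (n_i/n) \bar{\epsilon}_i(h). -/

import Mathlib

open MeasureTheory Finset

open scoped Classical in
/-- Number of sample points of `S` falling in the region `A`. -/
noncomputable def cnt {Z : Type*} {n : ℕ} (S : Fin n → Z) (A : Set Z) : ℕ :=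
  (Finset.univ.filter (fun j => S j ∈ A)).card

/-- Indices of the regions that contain at least one sample point. -/
noncomputable def Tset {Z : Type*} {n K : ℕ} (S : Fin n → Z) (Zpart : Fin K → Set Z) :
    Finset (Fin K) :=
  Finset.univ.filter (fun i => 0 < cnt S (Zpart i))

/-- Empirical loss of `ℓ` on the sample `S`. -/
noncomputable def empLoss {Z : Type*} {n : ℕ} (ℓ : Z → ℝ) (S : Fin n → Z) : ℝ :=
  (∑ j, ℓ (S j)) / n

open scoped Classical in
/-- Empirical loss of `ℓ` on the subsample of `S` lying in `A`. -/
noncomputable def empLossIn {Z : Type*} {n : ℕ} (ℓ : Z → ℝ) (S : Fin n → Z) (A : Set Z) : ℝ :=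
  (∑ j ∈ Finset.univ.filter (fun j => S j ∈ A), ℓ (S j)) / (cnt S A : ℝ)

/-- Conditional expectation `E[ℓ z ∣ z ∈ A]`. -/
noncomputable def condAvg {Z : Type*} [MeasurableSpace Z] (P : Measure Z) (ℓ : Z → ℝ)
    (A : Set Z) : ℝ :=
  (∫ z in A, ℓ z ∂P) / (P A).toReal

/-- Worst-case local robustness level `sup_{s ∈ S ∩ A, z ∈ A} |ℓ s - ℓ z|`. -/
noncomputable def epsSup {Z : Type*} {n : ℕ} (ℓ : Z → ℝ) (S : Fin n → Z) (A : Set Z) : ℝ :=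
  sSup {x : ℝ | ∃ j : Fin n, S j ∈ A ∧ ∃ z ∈ A, x = |ℓ (S j) - ℓ z|}

open scoped Classical in
/-- Average local sensitivity `(1/n_i) ∑_{s ∈ S ∩ A} E[|ℓ z - ℓ s| ∣ z ∈ A]`. -/
noncomputable def epsBar {Z : Type*} [MeasurableSpace Z] {n : ℕ} (P : Measure Z) (ℓ : Z → ℝ)
    (S : Fin n → Z) (A : Set Z) : ℝ :=
  (∑ j ∈ Finset.univ.filter (fun j => S j ∈ A),
    condAvg P (fun z => |ℓ z - ℓ (S j)|) A) / (cnt S A : ℝ)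

section Helpers
open Real ProbabilityTheory

open scoped Classical in
lemma cnt_cast {Z : Type*} {n : ℕ} (S : Fin n → Z) (A : Set Z) :
    ((cnt S A : ℝ)) = ∑ j, if S j ∈ A then (1:ℝ) else 0 := by
  rw [cnt, Finset.card_filter]
  push_cast
  exact Finset.sum_congr rfl fun j _ => by split <;> simp

lemma measurable_cnt {Z : Type*} [MeasurableSpace Z] {n : ℕ} {A : Set Z}
    (hA : MeasurableSet A) : Measurable fun S : Fin n → Z => (cnt S A : ℝ) := by
  classical
  simp only [cnt_cast]
  exact Finset.measurable_sum _ fun j _ =>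
    Measurable.ite (p := fun S : Fin n → Z => S j ∈ A) (hA.preimage (measurable_pi_apply j))
      measurable_const measurable_const

variable {Z : Type*} [MeasurableSpace Z] (P : Measure Z) [IsProbabilityMeasure P]

open scoped Classical in
/-- single coordinate integral -/
lemma integral_exp_ind {A : Set Z} (hA : MeasurableSet A) (t : ℝ) :
    ∫ z, Real.exp (t * (if z ∈ A then (1:ℝ) else 0)) ∂P
      = 1 + (P A).toReal * (Real.exp t - 1) := by
  have h : (fun z => Real.exp (t * (if z ∈ A then (1:ℝ) else 0)))
      = fun z => 1 + A.indicator (fun _ => Real.exp t - 1) z := by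
    funext z
    by_cases hz : z ∈ A <;> simp [hz, Set.indicator_apply, mul_one, mul_zero, Real.exp_zero]
  rw [h, integral_add (integrable_const 1) ((integrable_const _).indicator hA),
    integral_const, integral_indicator_const _ hA]
  simp [mul_comm]
  exact Or.inl rfl

open scoped Classical in
/-- Chernoff bound for the count. -/
lemma chernoff_cnt {n : ℕ} {A : Set Z} (hA : MeasurableSet A) {t : ℝ} (ht : 0 ≤ t) (ε : ℝ) :
    (Measure.pi fun _ : Fin n => P) {S | ε ≤ (cnt S A : ℝ)}
      ≤ ENNReal.ofReal (Real.exp ((n : ℝ) * (P A).toReal * (Real.exp t - 1) - t * ε)) := by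
  letI : MeasureSpace Z := ⟨P⟩
  have hvol : (volume : Measure (Fin n → Z)) = Measure.pi fun _ : Fin n => P := rfl
  set μ : Measure (Fin n → Z) := Measure.pi fun _ : Fin n => P with hμ
  haveI : IsProbabilityMeasure μ := by rw [hμ]; infer_instance
  set X : (Fin n → Z) → ℝ := fun S => (cnt S A : ℝ) with hX
  have hXmeas : Measurable X := measurable_cnt hA
  -- exp (t * X S) as a product
  have hprod : ∀ S : Fin n → Z, Real.exp (t * X S)
      = ∏ j : Fin n, Real.exp (t * (if S j ∈ A then (1:ℝ) else 0)) := by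
    intro S
    show Real.exp (t * ((cnt S A : ℝ))) = _
    rw [cnt_cast, Finset.mul_sum, Real.exp_sum]
  -- integrability of exp (t * X)
  have hbdd : ∀ S, ‖Real.exp (t * X S)‖ ≤ Real.exp (t * n) := by
    intro S
    rw [Real.norm_eq_abs, abs_of_pos (Real.exp_pos _), Real.exp_le_exp]
    have : X S ≤ n := by
      rw [hX]
      exact_mod_cast Nat.cast_le.mpr (by
        simpa [cnt] using (Finset.card_filter_le Finset.univ (fun j => S j ∈ A)))
    exact mul_le_mul_of_nonneg_left this ht
  have hint : Integrable (fun S => Real.exp (t * X S)) μ :=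
    (integrable_const (Real.exp (t * n))).mono'
      (((hXmeas.const_mul t).exp).aestronglyMeasurable)
      (Filter.Eventually.of_forall hbdd)
  -- mgf computation
  have hmgf : mgf X μ t ≤ Real.exp ((n : ℝ) * (P A).toReal * (Real.exp t - 1)) := by
    have : mgf X μ t = (1 + (P A).toReal * (Real.exp t - 1)) ^ n := by
      rw [mgf]
      calc μ[fun S => Real.exp (t * X S)]
          = ∫ S, ∏ j : Fin n, Real.exp (t * (if S j ∈ A then (1:ℝ) else 0)) ∂μ := by
            exact integral_congr_ae (Filter.Eventually.of_forall fun S => hprod S)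
        _ = (∫ z, Real.exp (t * (if z ∈ A then (1:ℝ) else 0)) ∂P) ^ n := by
            rw [hμ]
            simpa using MeasureTheory.integral_fintype_prod_eq_pow (𝕜 := ℝ) (ι := Fin n) (μ := P)
              (fun z => Real.exp (t * (if z ∈ A then (1:ℝ) else 0)))
        _ = (1 + (P A).toReal * (Real.exp t - 1)) ^ n := by rw [integral_exp_ind P hA]
    rw [this]
    have h1 : (0:ℝ) ≤ (P A).toReal * (Real.exp t - 1) :=
      mul_nonneg ENNReal.toReal_nonneg (by linarith [Real.one_le_exp ht])
    have := Real.add_one_le_exp ((P A).toReal * (Real.exp t - 1))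
    calc (1 + (P A).toReal * (Real.exp t - 1)) ^ n
        ≤ (Real.exp ((P A).toReal * (Real.exp t - 1))) ^ n := by
          apply pow_le_pow_left₀ (by linarith) (by linarith)
      _ = Real.exp ((n:ℝ) * ((P A).toReal * (Real.exp t - 1))) := by
          rw [← Real.exp_nat_mul]
      _ = Real.exp ((n:ℝ) * (P A).toReal * (Real.exp t - 1)) := by rw [mul_assoc]
  -- Markov / Chernoff
  have hch := measure_ge_le_exp_mul_mgf (μ := μ) (X := X) ε ht hint
  have hne : μ {S | ε ≤ X S} ≠ ⊤ := measure_ne_top _ _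
  rw [← ENNReal.ofReal_toReal hne]
  apply ENNReal.ofReal_le_ofReal
  calc (μ {S | ε ≤ X S}).toReal ≤ Real.exp (-t * ε) * mgf X μ t := hch
    _ ≤ Real.exp (-t * ε) * Real.exp ((n : ℝ) * (P A).toReal * (Real.exp t - 1)) := by
        apply mul_le_mul_of_nonneg_left hmgf (le_of_lt (Real.exp_pos _))
    _ = Real.exp ((n : ℝ) * (P A).toReal * (Real.exp t - 1) - t * ε) := by
        rw [← Real.exp_add]; ring_nf

lemma exponent_choice {n : ℕ} (hn : 0 < n) {p L : ℝ} (hp : 0 < p) (hL : 0 ≤ L) :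
    ∃ t : ℝ, 0 ≤ t ∧
      (n : ℝ) * p * (Real.exp t - 1) - t * ((n:ℝ) * p + 2 * Real.sqrt ((n:ℝ) * p * L) + 2 * L)
        ≤ -L := by
  have hnp : 0 < (n : ℝ) * p := mul_pos (by exact_mod_cast hn) hp
  set a : ℝ := Real.sqrt (L / ((n:ℝ) * p)) with ha
  refine ⟨min 1 a, le_min zero_le_one (Real.sqrt_nonneg _), ?_⟩
  set t := min 1 a with htdef
  have ht0 : 0 ≤ t := le_min zero_le_one (Real.sqrt_nonneg _)
  have ht1 : t ≤ 1 := min_le_left _ _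
  -- exp t ≤ 1 + t + t^2
  have hexp : Real.exp t ≤ 1 + t + t ^ 2 := by
    have hb := Real.exp_bound (x := t) (by rw [abs_of_nonneg ht0]; exact ht1) (by norm_num : 0 < 2)
    have hsum : ∑ i ∈ Finset.range 2, t ^ i / (Nat.factorial i : ℝ) = 1 + t := by
      simp [Finset.sum_range_succ, Nat.factorial]
    rw [hsum] at hb
    rw [abs_of_nonneg ht0] at hb
    norm_num [Nat.factorial] at hb
    have := abs_le.mp hb
    nlinarith [sq_nonneg t]
  have key : (n:ℝ) * p * (Real.exp t - 1)
      ≤ (n:ℝ) * p * t + (n:ℝ) * p * t ^ 2 := by nlinarith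
  have main : (n:ℝ) * p * t ^ 2 - 2 * t * Real.sqrt ((n:ℝ)*p*L) - 2 * t * L ≤ -L := by
    rcases le_or_gt a 1 with hc | hc
    · -- t = a
      have hta : t = a := min_eq_right hc
      have ha2 : a ^ 2 = L / ((n:ℝ) * p) := Real.sq_sqrt (div_nonneg hL hnp.le)
      have h1 : (n:ℝ) * p * t ^ 2 = L := by
        rw [hta, ha2]; field_simp
      have h2 : t * Real.sqrt ((n:ℝ)*p*L) = L := by
        rw [hta, ha, ← Real.sqrt_mul (div_nonneg hL hnp.le)]
        rw [show L / ((n:ℝ)*p) * ((n:ℝ)*p*L) = L ^ 2 by field_simp]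
        exact Real.sqrt_sq hL
      have h3 : 0 ≤ t * L := mul_nonneg ht0 hL
      nlinarith
    · -- t = 1, and np < L
      have hta : t = 1 := min_eq_left hc.le
      have hnpL : (n:ℝ) * p < L := by
        have h1 : (1:ℝ) < L / ((n:ℝ) * p) := by
          have h2 : (1:ℝ) < (Real.sqrt (L/((n:ℝ)*p)))^2 := by
            have h3 : 1 < Real.sqrt (L/((n:ℝ)*p)) := by simpa [ha] using hc
            nlinarith [Real.sqrt_nonneg (L/((n:ℝ)*p))]
          rwa [Real.sq_sqrt (div_nonneg hL hnp.le)] at h2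
        exact (one_lt_div hnp).mp h1
      have hs : 0 ≤ Real.sqrt ((n:ℝ)*p*L) := Real.sqrt_nonneg _
      rw [hta]
      nlinarith
  nlinarith [mul_nonneg ht0 hnp.le]


open scoped Classical in
lemma tail_bound {Z : Type*} [MeasurableSpace Z] (P : Measure Z) [IsProbabilityMeasure P]
    {n : ℕ} (hn : 0 < n) {A : Set Z} (hA : MeasurableSet A) (hApos : 0 < P A)
    {L : ℝ} (hL : 0 ≤ L) :
    (Measure.pi fun _ : Fin n => P)
      {S | (n:ℝ) * (P A).toReal + 2 * Real.sqrt ((n:ℝ) * (P A).toReal * L) + 2 * L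
        < (cnt S A : ℝ)}
      ≤ ENNReal.ofReal (Real.exp (-L)) := by
  have hp : 0 < (P A).toReal := ENNReal.toReal_pos hApos.ne' (measure_ne_top P _)
  obtain ⟨t, ht0, hexp⟩ := exponent_choice hn hp hL
  set ε : ℝ := (n:ℝ) * (P A).toReal + 2 * Real.sqrt ((n:ℝ) * (P A).toReal * L) + 2 * L with hε
  calc (Measure.pi fun _ : Fin n => P) {S | ε < (cnt S A : ℝ)}
      ≤ (Measure.pi fun _ : Fin n => P) {S | ε ≤ (cnt S A : ℝ)} :=
        measure_mono fun S h => le_of_lt (Set.mem_setOf_eq ▸ h)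
    _ ≤ ENNReal.ofReal
        (Real.exp ((n : ℝ) * (P A).toReal * (Real.exp t - 1) - t * ε)) :=
        chernoff_cnt P hA ht0 ε
    _ ≤ ENNReal.ofReal (Real.exp (-L)) :=
        ENNReal.ofReal_le_ofReal (Real.exp_le_exp.mpr hexp)

end Helpers

open scoped Classical in
lemma det_core {Z : Type*} [MeasurableSpace Z] (P : Measure Z) [IsProbabilityMeasure P]
    {K : ℕ} (Zpart : Fin K → Set Z)
    (hZmeas : ∀ i, MeasurableSet (Zpart i))
    (hZdisj : ∀ i j, i ≠ j → Disjoint (Zpart i) (Zpart j))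
    (hZcover : (⋃ i, Zpart i) = Set.univ)
    (hZpos : ∀ i, 0 < P (Zpart i))
    {n : ℕ} (hn : 0 < n)
    (f : Z → ℝ) (hfm : Measurable f) (hf0 : ∀ z, 0 ≤ f z) (hfb : BddAbove (Set.range f))
    {L : ℝ} (hL : 0 ≤ L) (S : Fin n → Z)
    (hgood : ∀ i, (cnt S (Zpart i) : ℝ) ≤
      (n : ℝ) * (P (Zpart i)).toReal
        + 2 * Real.sqrt ((n:ℝ) * (P (Zpart i)).toReal * L) + 2 * L) :
    ∫ z, f z ∂P ≤
      (⨆ z, f z) * (Real.sqrt 2 + 1) * Real.sqrt (((Tset S Zpart).card : ℝ) * L / n)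
        + 2 * (⨆ z, f z) * ((Tset S Zpart).card : ℝ) * L / n
        + empLoss f S
        + ∑ i ∈ Tset S Zpart, ((cnt S (Zpart i) : ℝ) / n) * epsBar P f S (Zpart i) := by
  have hnR : (0:ℝ) < n := by exact_mod_cast hn
  set C : ℝ := ⨆ z, f z with hCdef
  set p : Fin K → ℝ := fun i => (P (Zpart i)).toReal with hpdef
  set q : Fin K → ℝ := fun i => (cnt S (Zpart i) : ℝ) / n with hqdef
  set c : Fin K → ℝ := fun i => condAvg P f (Zpart i) with hcdef
  set T : Finset (Fin K) := Tset S Zpart with hTdef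
  have hCle : ∀ z, f z ≤ C := fun z => le_ciSup hfb z
  have hC0 : 0 ≤ C := le_trans (hf0 (S ⟨0, hn⟩)) (hCle _)
  have hp_pos : ∀ i, 0 < p i := fun i =>
    ENNReal.toReal_pos (hZpos i).ne' (measure_ne_top P _)
  have hInt : Integrable f P := by
    refine (integrable_const C).mono' hfm.aestronglyMeasurable ?_
    exact Filter.Eventually.of_forall fun z => by
      rw [Real.norm_eq_abs, abs_of_nonneg (hf0 z)]; exact hCle z
  have hPdisj : Pairwise (Function.onFun Disjoint Zpart) := fun i j h => hZdisj i j h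
  have hcov : ∀ z : Z, ∃ i, z ∈ Zpart i := fun z =>
    Set.mem_iUnion.mp (hZcover ▸ Set.mem_univ z)
  choose idx hidx using fun j => hcov (S j)
  have hfib : ∀ i, (Finset.univ.filter fun j => S j ∈ Zpart i)
      = Finset.univ.filter fun j => idx j = i := by
    intro i
    ext j
    simp only [mem_filter, mem_univ, true_and]
    constructor
    · intro hj
      by_contra hne
      exact Set.disjoint_left.mp (hZdisj _ _ hne) (hidx j) hj
    · intro hj; exact hj ▸ hidx j
  have hcnt_fib : ∀ i, (cnt S (Zpart i) : ℕ)
      = (Finset.univ.filter fun j => idx j = i).card := by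
    intro i; rw [cnt, hfib i]
  -- sums of p and q are 1
  have hpsum : ∑ i, p i = 1 := by
    have h1 : P (⋃ i, Zpart i) = ∑' i, P (Zpart i) := measure_iUnion hPdisj hZmeas
    rw [hZcover, measure_univ, tsum_fintype] at h1
    have h2 := congrArg ENNReal.toReal h1
    rw [ENNReal.toReal_one, ENNReal.toReal_sum (fun i _ => measure_ne_top P _)] at h2
    exact h2.symm
  have hcntsum : ∑ i, (cnt S (Zpart i) : ℝ) = n := by
    have h1 : ∑ i, ∑ j ∈ Finset.univ.filter fun j => idx j = i, (1:ℝ)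
        = ∑ j : Fin n, (1:ℝ) := Finset.sum_fiberwise Finset.univ idx fun _ => (1:ℝ)
    simp only [Finset.sum_const, nsmul_eq_mul, mul_one] at h1
    simp only [hcnt_fib]
    rw [h1]
    simp
  have hqsum : ∑ i, q i = 1 := by
    rw [hqdef, ← Finset.sum_div, hcntsum, div_self hnR.ne']
  -- set integrals
  have hsetint : ∀ i, ∫ z in Zpart i, f z ∂P = p i * c i := by
    intro i
    rw [hcdef]
    show _ = p i * ((∫ z in Zpart i, f z ∂P) / p i)
    rw [mul_comm, div_mul_cancel₀ _ (hp_pos i).ne']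
  have hsplit : ∫ z, f z ∂P = ∑ i, p i * c i := by
    calc ∫ z, f z ∂P = ∫ z in ⋃ i, Zpart i, f z ∂P := by rw [hZcover, setIntegral_univ]
      _ = ∑' i, ∫ z in Zpart i, f z ∂P :=
          integral_iUnion hZmeas hPdisj hInt.integrableOn
      _ = ∑ i, ∫ z in Zpart i, f z ∂P := tsum_fintype _
      _ = ∑ i, p i * c i := Finset.sum_congr rfl fun i _ => hsetint i
  -- bounds on conditional averages
  have hc0 : ∀ i, 0 ≤ c i := fun i =>
    div_nonneg (setIntegral_nonneg (hZmeas i) fun z _ => hf0 z) ENNReal.toReal_nonneg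
  have hcC : ∀ i, c i ≤ C := by
    intro i
    rw [hcdef]
    show (∫ z in Zpart i, f z ∂P) / p i ≤ C
    rw [div_le_iff₀ (hp_pos i)]
    calc ∫ z in Zpart i, f z ∂P
        ≤ ∫ _ in Zpart i, C ∂P :=
          setIntegral_mono_on hInt.integrableOn
            (integrableOn_const (measure_ne_top _ _)) (hZmeas i)
            (fun z _ => hCle z)
      _ = (P (Zpart i)).toReal • C := by rw [setIntegral_const]; rfl
      _ = C * p i := by rw [smul_eq_mul, mul_comm]
  -- per-sample inequality
  have hkey : ∀ i, ∀ j : Fin n, S j ∈ Zpart i →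
      c i ≤ f (S j) + condAvg P (fun z => |f z - f (S j)|) (Zpart i) := by
    intro i j hj
    have habs : Integrable (fun z => |f z - f (S j)|) P :=
      (hInt.sub (integrable_const _)).abs
    have h1 : ∫ z in Zpart i, f z ∂P
        ≤ ∫ z in Zpart i, (f (S j) + |f z - f (S j)|) ∂P :=
      setIntegral_mono_on hInt.integrableOn
        ((integrable_const _).add habs).integrableOn (hZmeas i)
        (fun z _ => by have := le_abs_self (f z - f (S j)); linarith)
    have h2 : ∫ z in Zpart i, (f (S j) + |f z - f (S j)|) ∂P
        = p i * f (S j) + ∫ z in Zpart i, |f z - f (S j)| ∂P := by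
      rw [integral_add (integrableOn_const (C := f (S j)) (measure_ne_top P (Zpart i)) enorm_ne_top)
        habs.integrableOn, setIntegral_const, smul_eq_mul]
      rfl
    rw [hcdef]
    show (∫ z in Zpart i, f z ∂P) / p i ≤ _
    rw [condAvg, div_le_iff₀ (hp_pos i)]
    have h3 : (f (S j) + (∫ z in Zpart i, |f z - f (S j)| ∂P) / p i) * p i
        = p i * f (S j) + ∫ z in Zpart i, |f z - f (S j)| ∂P := by
      rw [add_mul, div_mul_cancel₀ _ (hp_pos i).ne', mul_comm]
    show ∫ z in Zpart i, f z ∂P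
        ≤ (f (S j) + (∫ z in Zpart i, |f z - f (S j)| ∂P) / p i) * p i
    rw [h3]
    linarith
  -- membership in T
  have hTmem : ∀ i, (i ∈ T ↔ 0 < cnt S (Zpart i)) := by
    intro i; rw [hTdef, Tset]; simp
  have hqzero : ∀ i, i ∉ T → q i = 0 := by
    intro i hi
    have : cnt S (Zpart i) = 0 := by
      by_contra h
      exact hi ((hTmem i).mpr (Nat.pos_of_ne_zero h))
    rw [hqdef]
    show ((cnt S (Zpart i) : ℝ)) / n = 0
    rw [this]; simp
  -- extend sum over T to univ
  have hqcT : ∑ i ∈ T, q i * c i = ∑ i, q i * c i :=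
    Finset.sum_subset (Finset.subset_univ T)
      (fun i _ hi => by rw [hqzero i hi, zero_mul])
  -- middle chain
  have hmiddle : ∑ i, q i * c i
      ≤ empLoss f S + ∑ i ∈ T, q i * epsBar P f S (Zpart i) := by
    have e1 : ∑ i, q i * c i
        = (∑ i, ∑ j ∈ Finset.univ.filter fun j => idx j = i, c i) / n := by
      rw [Finset.sum_div]
      refine Finset.sum_congr rfl fun i _ => ?_
      rw [Finset.sum_const, nsmul_eq_mul, ← hcnt_fib i]
      show q i * c i = (cnt S (Zpart i) : ℝ) * c i / n
      rw [hqdef]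
      ring
    have e3 : ∑ i ∈ T, q i * epsBar P f S (Zpart i)
        = (∑ i, ∑ j ∈ Finset.univ.filter fun j => idx j = i,
            condAvg P (fun z => |f z - f (S j)|) (Zpart i)) / n := by
      rw [Finset.sum_div]
      rw [Finset.sum_subset (Finset.subset_univ T)]
      · refine Finset.sum_congr rfl fun i _ => ?_
        by_cases hi : i ∈ T
        · have hcpos : (0:ℝ) < (cnt S (Zpart i) : ℝ) := by
            exact_mod_cast (hTmem i).mp hi
          rw [epsBar, hfib i]
          show (cnt S (Zpart i) : ℝ) / n *
              ((∑ j ∈ Finset.univ.filter fun j => idx j = i,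
                condAvg P (fun z => |f z - f (S j)|) (Zpart i)) / (cnt S (Zpart i) : ℝ)) = _
          field_simp
        · have hc0' : cnt S (Zpart i) = 0 := by
            by_contra h
            exact hi ((hTmem i).mpr (Nat.pos_of_ne_zero h))
          have hfil : (Finset.univ.filter fun j => idx j = i) = ∅ := by
            rw [← hfib i]
            rw [cnt] at hc0'
            exact Finset.card_eq_zero.mp hc0'
          rw [hqzero i hi, zero_mul, hfil]
          simp
      · intro i _ hi
        rw [hqzero i hi, zero_mul]
    have e2 : ∑ i, ∑ j ∈ Finset.univ.filter fun j => idx j = i, f (S j)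
        = ∑ j, f (S j) := Finset.sum_fiberwise Finset.univ idx fun j => f (S j)
    have hle : ∑ i, ∑ j ∈ Finset.univ.filter fun j => idx j = i, c i
        ≤ ∑ i, ∑ j ∈ Finset.univ.filter fun j => idx j = i,
            (f (S j) + condAvg P (fun z => |f z - f (S j)|) (Zpart i)) := by
      refine Finset.sum_le_sum fun i _ => Finset.sum_le_sum fun j hj => ?_
      have hji : idx j = i := (Finset.mem_filter.mp hj).2
      exact hkey i j (hji ▸ hidx j)
    rw [e1, empLoss, e3, ← add_div]
    gcongr
    have hsum_add : ∑ i, ∑ j ∈ Finset.univ.filter fun j => idx j = i,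
        (f (S j) + condAvg P (fun z => |f z - f (S j)|) (Zpart i))
        = (∑ i, ∑ j ∈ Finset.univ.filter fun j => idx j = i, f (S j))
          + ∑ i, ∑ j ∈ Finset.univ.filter fun j => idx j = i,
              condAvg P (fun z => |f z - f (S j)|) (Zpart i) := by
      rw [← Finset.sum_add_distrib]
      exact Finset.sum_congr rfl fun i _ => by rw [← Finset.sum_add_distrib]
    rw [hsum_add, e2] at hle
    exact hle
  -- deficit bound
  set M : Fin K → ℝ := fun i => max (p i - q i) 0 with hMdef
  have hMsum : ∑ i, M i = ∑ i, max (q i - p i) 0 := by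
    have h0 : ∑ i, (M i - max (q i - p i) 0) = 0 := by
      calc ∑ i, (M i - max (q i - p i) 0) = ∑ i, (p i - q i) := by
            refine Finset.sum_congr rfl fun i _ => ?_
            show max (p i - q i) 0 - max (q i - p i) 0 = p i - q i
            rw [show q i - p i = -(p i - q i) by ring]
            exact max_zero_sub_max_neg_zero_eq_self _
        _ = 0 := by rw [Finset.sum_sub_distrib, hpsum, hqsum, sub_self]
    rw [Finset.sum_sub_distrib] at h0
    linarith
  have hM_T : ∑ i, max (q i - p i) 0 = ∑ i ∈ T, max (q i - p i) 0 := by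
    symm
    apply Finset.sum_subset (Finset.subset_univ T)
    intro i _ hi
    rw [hqzero i hi, zero_sub]
    exact max_eq_right (neg_nonpos.mpr (hp_pos i).le)
  have hbound_i : ∀ i ∈ T, max (q i - p i) 0
      ≤ 2 * (Real.sqrt (p i) * Real.sqrt (L / n)) + 2 * L / n := by
    intro i _
    have hg := hgood i
    have hsq : Real.sqrt ((n:ℝ) * p i * L) / n = Real.sqrt (p i) * Real.sqrt (L / n) := by
      rw [← Real.sqrt_mul (hp_pos i).le,
        show p i * (L / n) = ((n:ℝ) * p i * L) / (n:ℝ)^2 by field_simp,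
        Real.sqrt_div (by positivity) ((n:ℝ)^2), Real.sqrt_sq hnR.le]
    refine max_le ?_ (by positivity)
    have hq_le : q i ≤ p i + 2 * (Real.sqrt ((n:ℝ) * p i * L) / n) + 2 * L / n := by
      have hdiv : (cnt S (Zpart i) : ℝ) / n
          ≤ ((n:ℝ) * p i + 2 * Real.sqrt ((n:ℝ) * p i * L) + 2 * L) / n := by gcongr
      calc q i = (cnt S (Zpart i) : ℝ) / n := rfl
        _ ≤ ((n:ℝ) * p i + 2 * Real.sqrt ((n:ℝ) * p i * L) + 2 * L) / n := hdiv
        _ = p i + 2 * (Real.sqrt ((n:ℝ) * p i * L) / n) + 2 * L / n := by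
            field_simp
    rw [hsq] at hq_le
    linarith
  have hsqrt_card : ∑ i ∈ T, Real.sqrt (p i) ≤ Real.sqrt (T.card) := by
    have h5 : 0 ≤ ∑ i ∈ T, Real.sqrt (p i) :=
      Finset.sum_nonneg fun i _ => Real.sqrt_nonneg _
    rw [show ((T.card : ℝ)) = ((T.card :ℕ) : ℝ) from rfl]
    rw [Real.le_sqrt h5 (Nat.cast_nonneg _)]
    have h1 : (∑ i ∈ T, Real.sqrt (p i))^2 ≤ (T.card : ℝ) * ∑ i ∈ T, (Real.sqrt (p i))^2 :=
      sq_sum_le_card_mul_sum_sq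
    have h2 : ∑ i ∈ T, (Real.sqrt (p i))^2 = ∑ i ∈ T, p i :=
      Finset.sum_congr rfl fun i _ => Real.sq_sqrt (hp_pos i).le
    have h3 : ∑ i ∈ T, p i ≤ 1 := by
      rw [← hpsum]
      exact Finset.sum_le_sum_of_subset_of_nonneg (Finset.subset_univ T)
        (fun i _ _ => (hp_pos i).le)
    have h4 : (0:ℝ) ≤ (T.card : ℝ) := Nat.cast_nonneg _
    nlinarith
  have hMtotal : ∑ i, M i
      ≤ 2 * Real.sqrt ((T.card:ℝ)) * Real.sqrt (L/n) + 2 * (T.card:ℝ) * L / n := by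
    rw [hMsum, hM_T]
    calc ∑ i ∈ T, max (q i - p i) 0
        ≤ ∑ i ∈ T, (2 * (Real.sqrt (p i) * Real.sqrt (L / n)) + 2 * L / n) :=
          Finset.sum_le_sum hbound_i
      _ = (∑ i ∈ T, Real.sqrt (p i)) * (2 * Real.sqrt (L/n)) + (T.card:ℝ) * (2 * L / n) := by
          rw [Finset.sum_add_distrib, Finset.sum_const, nsmul_eq_mul]
          congr 1
          rw [Finset.sum_mul]
          exact Finset.sum_congr rfl fun i _ => by ring
      _ ≤ Real.sqrt ((T.card:ℝ)) * (2 * Real.sqrt (L/n)) + (T.card:ℝ) * (2 * L / n) := by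
          have h6 : (0:ℝ) ≤ 2 * Real.sqrt (L/n) := by positivity
          gcongr
      _ = 2 * Real.sqrt ((T.card:ℝ)) * Real.sqrt (L/n) + 2 * (T.card:ℝ) * L / n := by ring
  have hfinal1 : ∫ z, f z ∂P ≤ ∑ i, q i * c i + C * (∑ i, M i) := by
    rw [hsplit]
    have hterm : ∀ i ∈ Finset.univ, (p i - q i) * c i ≤ M i * C := by
      intro i _
      rcases le_total (p i - q i) 0 with h | h
      · calc (p i - q i) * c i ≤ 0 := mul_nonpos_of_nonpos_of_nonneg h (hc0 i)
          _ ≤ M i * C := mul_nonneg (le_max_right _ _) hC0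
      · show _ ≤ max (p i - q i) 0 * C
        rw [max_eq_left h]
        exact mul_le_mul_of_nonneg_left (hcC i) h
    have hsum2 : ∑ i, p i * c i = ∑ i, q i * c i + ∑ i, (p i - q i) * c i := by
      rw [← Finset.sum_add_distrib]
      exact Finset.sum_congr rfl fun i _ => by ring
    calc ∑ i, p i * c i = ∑ i, q i * c i + ∑ i, (p i - q i) * c i := hsum2
      _ ≤ ∑ i, q i * c i + ∑ i, M i * C := by
          have := Finset.sum_le_sum hterm
          linarith
      _ = ∑ i, q i * c i + C * (∑ i, M i) := by rw [← Finset.sum_mul]; ring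
  have hsqrt2 : (1:ℝ) ≤ Real.sqrt 2 := by
    rw [show (1:ℝ) = Real.sqrt 1 by simp]
    exact Real.sqrt_le_sqrt (by norm_num)
  have hcombine : Real.sqrt ((T.card:ℝ)) * Real.sqrt (L/n) = Real.sqrt ((T.card:ℝ) * L / n) := by
    rw [← Real.sqrt_mul (by positivity : (0:ℝ) ≤ (T.card:ℝ)), mul_div_assoc]
  have hslack : C * (∑ i, M i)
      ≤ C * (Real.sqrt 2 + 1) * Real.sqrt ((T.card:ℝ) * L / n)
        + 2 * C * (T.card:ℝ) * L / n := by
    have hs0 : (0:ℝ) ≤ Real.sqrt ((T.card:ℝ) * L / n) := Real.sqrt_nonneg _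
    have h1 : C * (∑ i, M i)
        ≤ C * (2 * Real.sqrt ((T.card:ℝ) * L / n) + 2 * (T.card:ℝ) * L / n) := by
      apply mul_le_mul_of_nonneg_left _ hC0
      rw [← hcombine]
      exact hMtotal.trans_eq (by ring)
    have h2 : C * (2 * Real.sqrt ((T.card:ℝ) * L / n))
        ≤ C * (Real.sqrt 2 + 1) * Real.sqrt ((T.card:ℝ) * L / n) := by
      have h7 : (2:ℝ) ≤ Real.sqrt 2 + 1 := by linarith
      have h8 : 2 * (C * Real.sqrt ((T.card:ℝ) * L / n))
          ≤ (Real.sqrt 2 + 1) * (C * Real.sqrt ((T.card:ℝ) * L / n)) :=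
        mul_le_mul_of_nonneg_right h7 (mul_nonneg hC0 hs0)
      calc C * (2 * Real.sqrt ((T.card:ℝ) * L / n))
          = 2 * (C * Real.sqrt ((T.card:ℝ) * L / n)) := by ring
        _ ≤ (Real.sqrt 2 + 1) * (C * Real.sqrt ((T.card:ℝ) * L / n)) := h8
        _ = C * (Real.sqrt 2 + 1) * Real.sqrt ((T.card:ℝ) * L / n) := by ring
    calc C * (∑ i, M i)
        ≤ C * (2 * Real.sqrt ((T.card:ℝ) * L / n) + 2 * (T.card:ℝ) * L / n) := h1
      _ = C * (2 * Real.sqrt ((T.card:ℝ) * L / n)) + 2 * C * (T.card:ℝ) * L / n := by ring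
      _ ≤ C * (Real.sqrt 2 + 1) * Real.sqrt ((T.card:ℝ) * L / n)
            + 2 * C * (T.card:ℝ) * L / n := by linarith only [h2]
  linarith only [hfinal1, hmiddle, hslack, hqcT]


/-- Local Sensitivity generalization bound. -/
theorem statement6 {Z : Type*} [MeasurableSpace Z] (P : Measure Z) [IsProbabilityMeasure P]
    {K : ℕ} (Zpart : Fin K → Set Z)
    (hZmeas : ∀ i, MeasurableSet (Zpart i))
    (hZdisj : ∀ i j, i ≠ j → Disjoint (Zpart i) (Zpart j))
    (hZcover : (⋃ i, Zpart i) = Set.univ)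
    (hZpos : ∀ i, 0 < P (Zpart i))
    {n : ℕ} (hn : 0 < n)
    (ℓ : (Fin n → Z) → Z → ℝ)
    (hℓmeas : ∀ S, Measurable (ℓ S))
    (hℓnonneg : ∀ S z, 0 ≤ ℓ S z)
    (hℓbdd : ∀ S, BddAbove (Set.range (ℓ S)))
    (δ : ℝ) (hδ : 0 < δ) :
    ENNReal.ofReal (1 - δ) ≤
      (Measure.pi fun _ : Fin n => P)
        {S | ∫ z, ℓ S z ∂P ≤
          (⨆ z, ℓ S z) * (Real.sqrt 2 + 1) *
              Real.sqrt (((Tset S Zpart).card : ℝ) * Real.log (2 * K / δ) / n)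
            + 2 * (⨆ z, ℓ S z) * ((Tset S Zpart).card : ℝ) * Real.log (2 * K / δ) / n
            + empLoss (ℓ S) S
            + ∑ i ∈ Tset S Zpart, ((cnt S (Zpart i) : ℝ) / n) * epsBar P (ℓ S) S (Zpart i)} := by
  classical
  rcases le_or_gt 1 δ with hδ1 | hδ1
  · have : ENNReal.ofReal (1 - δ) = 0 := ENNReal.ofReal_eq_zero.mpr (by linarith)
    rw [this]
    exact zero_le
  -- now δ < 1
  set μ : Measure (Fin n → Z) := Measure.pi fun _ : Fin n => P with hμ
  haveI : IsProbabilityMeasure μ := by rw [hμ]; infer_instance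
  have hK : 0 < K := by
    by_contra h
    push_neg at h
    interval_cases K
    have h1 : (⋃ i : Fin 0, Zpart i) = (∅ : Set Z) := Set.iUnion_of_empty _
    rw [hZcover] at h1
    have h2 : P Set.univ = 1 := measure_univ
    rw [h1] at h2
    simp at h2
  have hKR : (1:ℝ) ≤ (K:ℝ) := by exact_mod_cast hK
  set L : ℝ := Real.log (2 * K / δ) with hLdef
  have hquot : (1:ℝ) < 2 * K / δ := by
    rw [lt_div_iff₀ hδ]
    nlinarith
  have hL : 0 ≤ L := Real.log_nonneg hquot.le
  set Bad : Fin K → Set (Fin n → Z) := fun i =>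
    {S | (n:ℝ) * (P (Zpart i)).toReal
        + 2 * Real.sqrt ((n:ℝ) * (P (Zpart i)).toReal * L) + 2 * L
      < (cnt S (Zpart i) : ℝ)} with hBad
  have hBadMeas : ∀ i, MeasurableSet (Bad i) := by
    intro i
    exact measurableSet_lt measurable_const (measurable_cnt (hZmeas i))
  have hBadLe : ∀ i, μ (Bad i) ≤ ENNReal.ofReal (Real.exp (-L)) := by
    intro i
    exact tail_bound P hn (hZmeas i) (hZpos i) hL
  have hUnion : μ (⋃ i, Bad i) ≤ ENNReal.ofReal (δ / 2) := by
    calc μ (⋃ i, Bad i) ≤ ∑' i, μ (Bad i) := measure_iUnion_le _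
      _ = ∑ i, μ (Bad i) := tsum_fintype _
      _ ≤ ∑ _i : Fin K, ENNReal.ofReal (Real.exp (-L)) :=
          Finset.sum_le_sum fun i _ => hBadLe i
      _ = (K : ℕ) • ENNReal.ofReal (Real.exp (-L)) := by
          rw [Finset.sum_const, Finset.card_univ, Fintype.card_fin]
      _ = ENNReal.ofReal ((K:ℝ) * Real.exp (-L)) := by
          rw [nsmul_eq_mul, ← ENNReal.ofReal_natCast (K:ℕ),
            ← ENNReal.ofReal_mul (by positivity)]
      _ = ENNReal.ofReal (δ / 2) := by
          congr 1
          rw [hLdef, Real.exp_neg, Real.exp_log (by positivity)]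
          field_simp
  -- the good event implies the desired inequality
  have hsub : (⋃ i, Bad i)ᶜ ⊆
      {S | ∫ z, ℓ S z ∂P ≤
        (⨆ z, ℓ S z) * (Real.sqrt 2 + 1) *
            Real.sqrt (((Tset S Zpart).card : ℝ) * Real.log (2 * K / δ) / n)
          + 2 * (⨆ z, ℓ S z) * ((Tset S Zpart).card : ℝ) * Real.log (2 * K / δ) / n
          + empLoss (ℓ S) S
          + ∑ i ∈ Tset S Zpart, ((cnt S (Zpart i) : ℝ) / n) * epsBar P (ℓ S) S (Zpart i)} := by
    intro S hS
    rw [Set.mem_compl_iff, Set.mem_iUnion] at hS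
    push_neg at hS
    have hgood : ∀ i, (cnt S (Zpart i) : ℝ) ≤
        (n : ℝ) * (P (Zpart i)).toReal
          + 2 * Real.sqrt ((n:ℝ) * (P (Zpart i)).toReal * L) + 2 * L := by
      intro i
      have := hS i
      rw [hBad] at this
      simpa using le_of_not_gt (by simpa using this)
    exact det_core P Zpart hZmeas hZdisj hZcover hZpos hn (ℓ S) (hℓmeas S)
      (hℓnonneg S) (hℓbdd S) hL S hgood
  calc ENNReal.ofReal (1 - δ)
      ≤ ENNReal.ofReal (1 - δ / 2) := ENNReal.ofReal_le_ofReal (by linarith)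
    _ = 1 - ENNReal.ofReal (δ / 2) := by
        rw [ENNReal.ofReal_sub _ (by positivity), ENNReal.ofReal_one]
    _ ≤ 1 - μ (⋃ i, Bad i) := tsub_le_tsub_left hUnion 1
    _ = μ ((⋃ i, Bad i)ᶜ) := by
        rw [prob_compl_eq_one_sub (MeasurableSet.iUnion hBadMeas)]
    _ ≤ _ := measure_mono hsub
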